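/- Let R be a finite commutative ring with unit element. Then s(R) = |R| holds if and only if R is one of the following: (a) R is a finite field, or (b) R is isomorphic to ℤ/4ℤ, or (c) R is isomorphic to the ring ρ with four elements {0, 1, a, 1+a} satisfying 1+1 = 0 and a² = 0 (equivalently, ρ ≅ (ℤ/2ℤ)[X]/(X²), the dual numbers over ℤ/2ℤ). -/

import Mathlib

open Polynomial

namespace Stmt0Aux


def SSet (R : Type*) [CommRing R] : Set ℕ :=
  {m : ℕ | ∃ p : Polynomial R, p.degree < (m : WithBot ℕ) ∧ ∀ x : R, p.eval x = x ^ m}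

variable {R : Type*} [CommRing R]

lemma mem_SSet_of_pow_eq [Nontrivial R] {t l : ℕ} (hl : 1 ≤ l)
    (h : ∀ x : R, x ^ (t + l) = x ^ t) : (t + l) ∈ SSet R := by
  refine ⟨X ^ t, ?_, fun x => ?_⟩
  · rw [degree_X_pow]
    exact_mod_cast (by omega : t < t + l)
  · rw [eval_pow, eval_X]
    exact (h x).symm

lemma SSet_subset {A B : Type*} [CommRing A] [CommRing B] (e : A ≃+* B) :
    SSet A ⊆ SSet B := by
  rintro m ⟨p, hd, he⟩
  refine ⟨p.map (e : A →+* B), ?_, fun y => ?_⟩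
  · rwa [degree_map_eq_of_injective e.injective]
  · obtain ⟨x, rfl⟩ := e.surjective y
    have h1 : (e : A →+* B) x = e x := rfl
    rw [← h1, eval_map, eval₂_hom, he, map_pow, h1]

lemma SSet_eq {A B : Type*} [CommRing A] [CommRing B] (e : A ≃+* B) :
    SSet A = SSet B :=
  le_antisymm (SSet_subset e) (SSet_subset e.symm)

lemma field_case (K : Type*) [CommRing K] [Fintype K] (hf : IsField K) :
    sInf (SSet K) = Fintype.card K := by
  letI := hf.toField
  have hcard2 : 2 ≤ Fintype.card K := Fintype.one_lt_card
  have hmem : Fintype.card K ∈ SSet K := by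
    refine ⟨X, ?_, fun x => ?_⟩
    · rw [degree_X]
      exact_mod_cast hcard2
    · rw [eval_X, FiniteField.pow_card]
  refine le_antisymm (Nat.sInf_le hmem) (le_csInf ⟨_, hmem⟩ ?_)
  rintro m ⟨p, hd, he⟩
  by_contra hlt
  push_neg at hlt
  set q : K[X] := X ^ m - p with hq
  have hdq : q.degree = m := by
    rw [hq]
    rw [degree_sub_eq_left_of_degree_lt (by rwa [degree_X_pow]), degree_X_pow]
  have hq0 : q ≠ 0 := fun h0 => by simp [h0] at hdq
  have hnd : q.natDegree = m := natDegree_eq_of_degree_eq_some hdq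
  have : q = 0 := by
    apply Polynomial.eq_zero_of_natDegree_lt_card_of_eval_eq_zero q Function.injective_id
    · intro x
      simp only [hq, eval_sub, eval_pow, eval_X, he, id, sub_self]
    · rw [hnd]; exact hlt
  exact hq0 this

lemma card4_case (K : Type*) [CommRing K] [Fintype K]
    (hcard : Fintype.card K = 4) (h4 : ∀ x : K, x ^ 4 = x ^ 2)
    (h1 : ∀ a : K, ¬ ∀ x : K, a = x)
    (h2 : ∀ a b : K, ¬ ∀ x : K, a + b * x = x ^ 2)
    (h3 : ∀ a b c : K, ¬ ∀ x : K, a + b * x + c * x ^ 2 = x ^ 3) :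
    sInf (SSet K) = Fintype.card K := by
  have : Nontrivial K := Fintype.one_lt_card_iff_nontrivial.mp (by omega)
  have hmem : (4 : ℕ) ∈ SSet K := by
    refine ⟨X ^ 2, ?_, fun x => ?_⟩
    · rw [degree_X_pow]
      exact_mod_cast (by omega : 2 < 4)
    · rw [eval_pow, eval_X]
      exact (h4 x).symm
  rw [hcard]
  refine le_antisymm (Nat.sInf_le hmem) (le_csInf ⟨_, hmem⟩ ?_)
  rintro m ⟨p, hd, he⟩
  by_contra hlt
  push_neg at hlt
  rcases Nat.lt_or_ge m 1 with hm | hm1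
  · -- m = 0
    interval_cases m
    have hp0 : p = 0 := by
      rw [← degree_eq_bot, ← Nat.WithBot.lt_zero_iff]
      exact_mod_cast hd
    have := he 0
    rw [hp0, eval_zero, pow_zero] at this
    exact zero_ne_one this
  · have hp0 : p ≠ 0 := by
      intro h0
      have h11 := he 1
      rw [h0, eval_zero, one_pow] at h11
      exact zero_ne_one h11
    have hnd : p.natDegree < m := (natDegree_lt_iff_degree_lt hp0).mpr hd
    have hev : ∀ x : K, p.eval x = ∑ i ∈ Finset.range m, p.coeff i * x ^ i :=
      fun x => eval_eq_sum_range' hnd x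
    interval_cases m
    · exact h1 (p.coeff 0) (fun x => by
        have h5 := (hev x).symm.trans (he x)
        simpa using h5)
    · exact h2 (p.coeff 0) (p.coeff 1) (fun x => by
        have h5 := (hev x).symm.trans (he x)
        simp only [Finset.sum_range_succ, Finset.sum_range_zero, pow_zero, pow_one,
          mul_one, zero_add] at h5
        exact h5)
    · exact h3 (p.coeff 0) (p.coeff 1) (p.coeff 2) (fun x => by
        have h5 := (hev x).symm.trans (he x)
        simp only [Finset.sum_range_succ, Finset.sum_range_zero, pow_zero, pow_one,
          mul_one, zero_add] at h5
        exact h5)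




variable {R : Type*} [CommRing R]

/-- powers eventually repeat with period -/
lemma pow_eq_pow_add_mul (x : R) {a b : ℕ} (hab : a < b) (h : x ^ a = x ^ b) :
    ∀ c, a ≤ c → ∀ k, x ^ c = x ^ (c + k * (b - a)) := by
  have step : ∀ c, a ≤ c → x ^ c = x ^ (c + (b - a)) := by
    intro c hc
    have h1 : c + (b - a) = b + (c - a) := by omega
    have h2 : c = a + (c - a) := by omega
    rw [h1, pow_add, ← h, ← pow_add, ← h2]
  intro c hc k
  induction k with
  | zero => simp
  | succ n ih =>
      have h3 : c + (n + 1) * (b - a) = (c + n * (b - a)) + (b - a) := by ring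
      rw [h3, ← step (c + n * (b - a)) (by omega), ← ih]

lemma exists_idem_pow [Fintype R] (x : R) : ∃ m, 1 ≤ m ∧ x ^ (2 * m) = x ^ m := by
  obtain ⟨i, j, hne, hij⟩ := Fintype.exists_ne_map_eq_of_card_lt
    (fun n : Fin (Fintype.card R + 1) => x ^ (n : ℕ)) (by simp)
  rcases lt_or_gt_of_ne (fun h : (i:ℕ) = (j:ℕ) => hne (Fin.ext h)) with hlt | hlt
  · refine ⟨((i:ℕ) + 1) * ((j:ℕ) - (i:ℕ)),
      Nat.one_le_iff_ne_zero.mpr (Nat.mul_ne_zero (by omega) (by omega)), ?_⟩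
    have := pow_eq_pow_add_mul x hlt hij (((i:ℕ) + 1) * ((j:ℕ) - (i:ℕ)))
      (by nlinarith [Nat.sub_pos_of_lt hlt]) ((i:ℕ) + 1)
    rw [two_mul]; exact this.symm
  · refine ⟨((j:ℕ) + 1) * ((i:ℕ) - (j:ℕ)),
      Nat.one_le_iff_ne_zero.mpr (Nat.mul_ne_zero (by omega) (by omega)), ?_⟩
    have := pow_eq_pow_add_mul x hlt hij.symm (((j:ℕ) + 1) * ((i:ℕ) - (j:ℕ)))
      (by nlinarith [Nat.sub_pos_of_lt hlt]) ((j:ℕ) + 1)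
    rw [two_mul]; exact this.symm

lemma idem_pow {e : R} (he : e * e = e) : ∀ {m : ℕ}, 1 ≤ m → e ^ m = e := by
  intro m hm
  induction m with
  | zero => omega
  | succ n ih =>
      rcases Nat.eq_or_lt_of_le hm with h | h
      · simp [← h]
      · rw [pow_succ, ih (by omega), he]

/-- Main uniform identity: `x ^ (t + l) = x ^ t`. -/
lemma pow_add_eq [Fintype R] {t l : ℕ} (ht : 1 ≤ t)
    (htn : ∀ z : R, IsNilpotent z → z ^ t = 0)
    (hl : ∀ u : Rˣ, u ^ l = 1) (x : R) : x ^ (t + l) = x ^ t := by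
  obtain ⟨m, hm, hidem⟩ := exists_idem_pow x
  set e := x ^ m with he_def
  have he : e * e = e := by rw [he_def, ← pow_add, ← two_mul, hidem]
  have hxm : x * x ^ (m - 1) = x ^ m := by
    rw [← pow_succ']; congr 1; omega
  have hew : e * x ^ m = e := by rw [he_def, ← pow_add, ← two_mul, hidem]
  -- the unit u = e*x + (1-e)
  have hunit : (e * x + (1 - e)) * (e * x ^ (m - 1) + (1 - e)) = 1 := by
    linear_combination (e * e) * hxm + (x ^ m - x - x ^ (m - 1) + 1) * he + hew
  -- binomial collapse
  have hbin : ∀ k : ℕ, (e * x + (1 - e)) ^ k = e * x ^ k + (1 - e) := by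
    intro k
    induction k with
    | zero => simp
    | succ n ih =>
        rw [pow_succ, ih]
        have hx' : x ^ n * x = x ^ (n + 1) := (pow_succ x n).symm
        linear_combination (e * e) * hx' + (x ^ (n + 1) - x ^ n - x + 1) * he
  have hu : IsUnit (e * x + (1 - e)) := IsUnit.of_mul_eq_one _ hunit
  obtain ⟨u, hu_val⟩ := hu
  have hul : (e * x + (1 - e)) ^ l = 1 := by
    rw [← hu_val, ← Units.val_pow_eq_pow_val, hl u, Units.val_one]
  have hexl : e * x ^ l = e := by
    have := hbin l
    rw [hul] at this
    linear_combination - this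
  -- x * (1 - e) is nilpotent
  have h1e : (1 - e) * (1 - e) = 1 - e := by linear_combination he
  have hnil : IsNilpotent (x * (1 - e)) := by
    refine ⟨m, ?_⟩
    rw [mul_pow, idem_pow h1e hm]
    have : x ^ m * (1 - e) = x ^ m - x ^ m * e := by ring
    rw [this, mul_comm (x ^ m) e, hew, he_def, sub_self]
  have hxt : x ^ t * (1 - e) = 0 := by
    have h0 := htn _ hnil
    rw [mul_pow, idem_pow h1e ht] at h0
    exact h0
  have hxte : x ^ t = x ^ t * e := by linear_combination hxt
  calc x ^ (t + l) = x ^ t * x ^ l := by rw [pow_add]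
    _ = (x ^ t * e) * x ^ l := by rw [← hxte]
    _ = x ^ t * (e * x ^ l) := by ring
    _ = x ^ t * e := by rw [hexl]
    _ = x ^ t := by rw [← hxte]

/-- bound: every nilpotent z satisfies z ^ (card nilpotents) = 0 -/
lemma nilpotent_pow_card [Finite R] (z : R) (hz : IsNilpotent z) :
    z ^ Nat.card {w : R // IsNilpotent w} = 0 := by
  classical
  have : Fintype {w : R // IsNilpotent w} := Fintype.ofFinite _
  set N := Nat.card {w : R // IsNilpotent w} with hN
  have hNc : N = Fintype.card {w : R // IsNilpotent w} := Nat.card_eq_fintype_card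
  obtain ⟨K, hK⟩ := id hz
  -- find a repeat among z^1, ..., z^(N+1)
  have hinj : ¬ Function.Injective
      (fun i : Fin (N + 1) => (⟨z ^ ((i : ℕ) + 1), IsNilpotent.pow_succ _ hz⟩ :
        {w : R // IsNilpotent w})) := by
    intro hinj
    have := Fintype.card_le_of_injective _ hinj
    simp [← hNc] at this
  rw [Function.not_injective_iff] at hinj
  obtain ⟨i, j, hij, hne⟩ := hinj
  have hij' : z ^ ((i : ℕ) + 1) = z ^ ((j : ℕ) + 1) := congrArg Subtype.val hij
  -- wlog i < j; derive z ^ (min+1) = 0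
  have key : ∀ a b : ℕ, a < b → z ^ a = z ^ b → z ^ a = 0 := by
    intro a b hab h
    have := pow_eq_pow_add_mul z hab h a le_rfl K
    rw [this]
    rcases Nat.eq_zero_or_pos (b - a) with h0 | h0
    · omega
    · have : z ^ (a + K * (b - a)) = z ^ K * z ^ (a + K * (b - a) - K) := by
        rw [← pow_add]; congr 1
        have : K ≤ a + K * (b - a) := by nlinarith
        omega
      rw [this, hK, zero_mul]
  have hle : ∃ a, 1 ≤ a ∧ a ≤ N ∧ z ^ a = 0 := by
    rcases lt_or_gt_of_ne (fun h : (i:ℕ) = (j:ℕ) => hne (Fin.ext h)) with hlt | hlt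
    · exact ⟨(i:ℕ) + 1, by omega, by omega, key _ _ (by omega) hij'⟩
    · exact ⟨(j:ℕ) + 1, by omega, by omega, key _ _ (by omega) hij'.symm⟩
  obtain ⟨a, ha1, haN, ha0⟩ := hle
  calc z ^ N = z ^ a * z ^ (N - a) := by rw [← pow_add]; congr 1; omega
    _ = 0 := by rw [ha0, zero_mul]


instance : DecidableEq

 (DualNumber (ZMod 2)) :=
  fun a b => decidable_of_iff (a.fst = b.fst ∧ a.snd = b.snd)
    (by constructor
        · rintro ⟨h1, h2⟩; exact TrivSqZeroExt.ext h1 h2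
        · rintro rfl; exact ⟨rfl, rfl⟩)

instance : Fintype (DualNumber (ZMod 2)) := show Fintype (ZMod 2 × ZMod 2) from inferInstance

noncomputable def unitsEquivIsUnit (R : Type*) [Monoid R] : Rˣ ≃ {x : R // IsUnit x} where
  toFun u := ⟨u, u.isUnit⟩
  invFun x := x.2.unit
  left_inv u := Units.ext u.isUnit.unit_spec
  right_inv x := Subtype.ext x.2.unit_spec

lemma forward (R : Type*) [CommRing R] [Fintype R]
    (h : sInf (SSet R) = Fintype.card R) :
    IsField R ∨ Nonempty (R ≃+* ZMod 4) ∨ Nonempty (R ≃+* DualNumber (ZMod 2)) := by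
  classical
  -- R is nontrivial
  have hnt : Nontrivial R := by
    by_contra hns
    rw [not_nontrivial_iff_subsingleton] at hns
    have h0 : (0 : ℕ) ∈ SSet R :=
      ⟨0, by simpa [degree_zero] using Nat.WithBot.lt_zero_iff.mpr rfl,
        fun x => Subsingleton.elim _ _⟩
    have h1 := Nat.sInf_le h0
    rw [h] at h1
    have h2 := Fintype.card_pos (α := R)
    omega
  haveI : Nonempty {w : R // IsNilpotent w} := ⟨⟨0, IsNilpotent.zero⟩⟩
  set nN := Nat.card {w : R // IsNilpotent w} with hnN
  set lR := Nat.card Rˣ with hlR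
  have hnNpos : 0 < nN := Nat.card_pos
  have hlpos : 0 < lR := Nat.card_pos
  set Tset : Set ℕ := {t : ℕ | 0 < t ∧ ∀ z : R, IsNilpotent z → z ^ t = 0} with hTset
  have hnNT : nN ∈ Tset := ⟨hnNpos, fun z hz => nilpotent_pow_card z hz⟩
  set t := sInf Tset with ht
  have htmem : t ∈ Tset := Nat.sInf_mem ⟨_, hnNT⟩
  have htle : t ≤ nN := Nat.sInf_le hnNT
  have hlu : ∀ u : Rˣ, u ^ lR = 1 := fun u => pow_card_eq_one'
  have hA : ∀ x : R, x ^ (t + lR) = x ^ t := pow_add_eq htmem.1 htmem.2 hlu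
  have hmemS : (t + lR) ∈ SSet R := mem_SSet_of_pow_eq hlpos hA
  have hle : Fintype.card R ≤ t + lR := by rw [← h]; exact Nat.sInf_le hmemS
  have hcardU : Nat.card {x : R // IsUnit x} = lR :=
    (Nat.card_congr (unitsEquivIsUnit R).symm).trans rfl
  -- the sum map
  set f : {w : R // IsNilpotent w} ⊕ {x : R // IsUnit x} → R :=
    Sum.elim Subtype.val Subtype.val with hf
  have hfinj : Function.Injective f := by
    rintro (⟨w, hw⟩ | ⟨u, hu⟩) (⟨w', hw'⟩ | ⟨u', hu'⟩) hww <;>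
      simp only [hf, Sum.elim_inl, Sum.elim_inr] at hww
    · simp [hww]
    · exact absurd (hww ▸ hu') (hw.not_isUnit)
    · exact absurd (hww.symm ▸ hu) (hw'.not_isUnit)
    · simp [hww]
  -- locality
  have hloc : ∀ x : R, IsUnit x ∨ IsNilpotent x := by
    intro x
    by_contra hc
    push_neg at hc
    obtain ⟨hcu, hcn⟩ := hc
    have hinj2 : Function.Injective (fun s => (⟨f s, by
        rcases s with ⟨w, hw⟩ | ⟨u, hu⟩
        · exact fun hh => hcn (hh ▸ hw)
        · exact fun hh => hcu (hh ▸ hu)⟩ : {y : R // y ≠ x})) := by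
      intro s s' hss
      exact hfinj (congrArg Subtype.val hss)
    have hlt : Nat.card {y : R // y ≠ x} < Fintype.card R := by
      rw [Nat.card_eq_fintype_card]
      exact Fintype.card_subtype_lt (x := x) (by simp)
    have hge := Nat.card_le_card_of_injective _ hinj2
    rw [Nat.card_sum, hcardU] at hge
    omega
  -- partition equality : card R = nN + lR
  have hfsurj : Function.Surjective f := by
    intro y
    rcases hloc y with hy | hy
    · exact ⟨Sum.inr ⟨y, hy⟩, rfl⟩
    · exact ⟨Sum.inl ⟨y, hy⟩, rfl⟩
  have hcards : nN + lR = Fintype.card R := by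
    have := Nat.card_eq_of_bijective f ⟨hfinj, hfsurj⟩
    rw [Nat.card_sum, hcardU, ← hnN, Nat.card_eq_fintype_card (α := R)] at this
    exact this
  have hteq : t = nN := by omega
  -- Case t = 1 : field
  rcases Nat.eq_or_lt_of_le htmem.1 with ht1 | ht2
  · left
    refine ⟨exists_pair_ne R, mul_comm, ?_⟩
    intro a ha
    rcases hloc a with hu | hn
    · exact hu.exists_right_inv
    · exact absurd (by have := htmem.2 a hn; rwa [← ht1, pow_one] at this) ha
  -- t ≥ 2
  have hzex : ∃ z : R, IsNilpotent z ∧ z ^ (t - 1) ≠ 0 := by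
    have hnotmem : (t - 1) ∉ Tset := Nat.notMem_of_lt_sInf (by omega)
    rw [hTset, Set.mem_setOf_eq] at hnotmem
    push_neg at hnotmem
    exact hnotmem (by omega)
  obtain ⟨z, hznil, hz1⟩ := hzex
  have hztop : z ^ t = 0 := htmem.2 z hznil
  have hzero : ∀ a, 1 ≤ a → a ≤ t - 1 → z ^ a ≠ 0 := by
    intro a h1 h2 h0
    refine hz1 ?_
    calc z ^ (t-1) = z ^ a * z ^ (t-1-a) := by rw [← pow_add]; congr 1; omega
      _ = 0 := by rw [h0, zero_mul]
  have hpowcol : ∀ a b : ℕ, 1 ≤ a → a < b → b ≤ t - 1 → z ^ a = z ^ b → False := by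
    intro a b ha hab hb heq
    have hstep := pow_eq_pow_add_mul z hab heq a le_rfl t
    have hge : t ≤ t * (b - a) := Nat.le_mul_of_pos_right t (by omega)
    have hsplit : z ^ (a + t * (b - a)) = z ^ t * z ^ (a + t * (b - a) - t) := by
      rw [← pow_add]; congr 1; omega
    rw [hsplit, hztop, zero_mul] at hstep
    exact hzero a ha (by omega) hstep
  -- classification of nilpotents
  set g : Fin t → {w : R // IsNilpotent w} := fun i =>
    if h0 : (i : ℕ) = 0 then ⟨0, IsNilpotent.zero⟩
    else ⟨z ^ (i : ℕ), hznil.pow_of_pos h0⟩ with hg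
  have hginj : Function.Injective g := by
    intro i j hij
    have hv := congrArg Subtype.val hij
    by_cases hi : (i : ℕ) = 0 <;> by_cases hj : (j : ℕ) = 0
    · exact Fin.ext (by omega)
    · rw [hg] at hv
      simp only [dif_pos hi, dif_neg hj] at hv
      exact absurd hv.symm (hzero _ (by omega) (by have := j.2; omega))
    · rw [hg] at hv
      simp only [dif_pos hj, dif_neg hi] at hv
      exact absurd hv (hzero _ (by omega) (by have := i.2; omega))
    · rw [hg] at hv
      simp only [dif_neg hi, dif_neg hj] at hv
      by_contra hne
      have hij' : (i : ℕ) ≠ (j : ℕ) := fun hh => hne (Fin.ext hh)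
      rcases lt_or_gt_of_ne hij' with hlt | hlt
      · exact hpowcol _ _ (by omega) hlt (by have := j.2; omega) hv
      · exact hpowcol _ _ (by omega) hlt (by have := i.2; omega) hv.symm
  haveI : Fintype {w : R // IsNilpotent w} := Fintype.ofFinite _
  have hgbij : Function.Bijective g := by
    refine (Fintype.bijective_iff_injective_and_card g).mpr ⟨hginj, ?_⟩
    rw [Fintype.card_fin, ← Nat.card_eq_fintype_card, ← hnN, hteq]
  have hclass : ∀ w : R, IsNilpotent w → w = 0 ∨ ∃ i, 1 ≤ i ∧ i ≤ t - 1 ∧ w = z ^ i := by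
    intro w hw
    obtain ⟨i, hi⟩ := hgbij.2 ⟨w, hw⟩
    have hv := congrArg Subtype.val hi
    by_cases h0 : (i : ℕ) = 0
    · left
      rw [hg] at hv
      simp only [dif_pos h0] at hv
      exact hv.symm
    · right
      refine ⟨(i : ℕ), by omega, by have := i.2; omega, ?_⟩
      rw [hg] at hv
      simp only [dif_neg h0] at hv
      exact hv.symm
  -- t = 2
  have ht2' : t = 2 := by
    by_contra hne3
    have ht3 : 3 ≤ t := by omega
    have hz2 : z ^ 2 ≠ 0 := hzero 2 (by omega) (by omega)
    obtain ⟨v, hv⟩ := hznil.isUnit_one_add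
    have hwnil : IsNilpotent (z + z ^ 2) :=
      (Commute.all z (z ^ 2)).isNilpotent_add hznil (hznil.pow_of_pos (by omega))
    have hwpow : (z + z ^ 2) ^ (t - 1) = z ^ (t - 1) * (1 + z) ^ (t - 1) := by
      rw [show z + z ^ 2 = z * (1 + z) from by ring, mul_pow]
    have hwne : (z + z ^ 2) ^ (t - 1) ≠ 0 := by
      intro h0
      apply hz1
      have hv1 : (1 + z) * (↑v⁻¹ : R) = 1 := by rw [← hv]; exact v.mul_inv
      calc z ^ (t-1) = z ^ (t-1) * ((1 + z) * (↑v⁻¹ : R)) ^ (t-1) := by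
            rw [hv1, one_pow, mul_one]
        _ = ((z + z ^ 2) ^ (t-1)) * ((↑v⁻¹ : R)) ^ (t-1) := by
            rw [hwpow, mul_pow]; ring
        _ = 0 := by rw [h0, zero_mul]
    rcases hclass _ hwnil with h0 | ⟨i, hi1, hi2, hieq⟩
    · exact hwne (by rw [h0]; exact zero_pow (by omega))
    · rcases Nat.eq_or_lt_of_le hi1 with hie | hie
      · -- i = 1 : z + z^2 = z, so z^2 = 0
        exact hz2 (by rw [← hie, pow_one] at hieq; linear_combination hieq)
      · -- i ≥ 2
        apply hwne
        rw [hieq, ← pow_mul]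
        have hge : t ≤ i * (t - 1) := by
          calc t ≤ 2 * (t - 1) := by omega
            _ ≤ i * (t - 1) := Nat.mul_le_mul_right _ (by omega)
        calc z ^ (i * (t-1)) = z ^ t * z ^ (i * (t-1) - t) := by
              rw [← pow_add]; congr 1; omega
          _ = 0 := by rw [hztop, zero_mul]
  -- now t = 2 : N = {0, z}, z ≠ 0, z^2 = 0
  have hz0 : z ≠ 0 := by
    have := hzero 1 le_rfl (by omega)
    rwa [pow_one] at this
  have hzz : z * z = 0 := by
    have := hztop
    rw [ht2', pow_two] at this
    exact this
  have hclass2 : ∀ w : R, IsNilpotent w → w = 0 ∨ w = z := by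
    intro w hw
    rcases hclass w hw with h0 | ⟨i, hi1, hi2, hieq⟩
    · exact Or.inl h0
    · right
      have : i = 1 := by omega
      rw [this, pow_one] at hieq
      exact hieq
  have h1z0 : (1 : R) + z ≠ 0 := by
    intro h0
    exact one_ne_zero (α := R) (by linear_combination (1 - z) * h0 + hzz)
  have hxz_unit : ∀ x : R, IsUnit x → x * z = z := by
    intro x hx
    have hnil : IsNilpotent (x * z) := ⟨2, by rw [mul_pow, pow_two z, hzz, mul_zero]⟩
    rcases hclass2 _ hnil with h0 | h1
    · exact absurd (hx.mul_left_cancel (by rw [mul_zero]; exact h0)) hz0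
    · exact h1
  have hunit2 : ∀ x : R, IsUnit x → x = 1 ∨ x = 1 + z := by
    intro x hx
    rcases hloc (x - 1) with hu | hn
    · exfalso
      have h1 : (x - 1) * z = 0 := by linear_combination hxz_unit x hx
      exact hz0 (hu.mul_left_cancel (by rw [mul_zero]; exact h1))
    · rcases hclass2 _ hn with h0 | h1
      · left; linear_combination h0
      · right; linear_combination h1
  have hmem4 : ∀ x : R, x = 0 ∨ x = z ∨ x = 1 ∨ x = 1 + z := by
    intro x
    rcases hloc x with hu | hn
    · rcases hunit2 x hu with hh | hh
      · exact Or.inr (Or.inr (Or.inl hh))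
      · exact Or.inr (Or.inr (Or.inr hh))
    · rcases hclass2 x hn with hh | hh
      · exact Or.inl hh
      · exact Or.inr (Or.inl hh)
  have hz1' : z ≠ 1 := by
    intro hh
    have hzz' := hzz
    rw [hh, mul_one] at hzz'
    exact one_ne_zero hzz'
  have huniv : ({0, z, 1, 1 + z} : Finset R) = Finset.univ := by
    apply Finset.eq_univ_of_forall
    intro x
    rcases hmem4 x with hh | hh | hh | hh <;> simp [hh]
  have hn1 : (1 : R) ∉ ({1 + z} : Finset R) := by
    simp only [Finset.mem_singleton]
    intro hh
    exact hz0 (by linear_combination -hh)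
  have hnz : z ∉ ({1, 1 + z} : Finset R) := by
    simp only [Finset.mem_insert, Finset.mem_singleton]
    push_neg
    exact ⟨hz1', fun hh => one_ne_zero (α := R) (by linear_combination -hh)⟩
  have hn0 : (0 : R) ∉ ({z, 1, 1 + z} : Finset R) := by
    simp only [Finset.mem_insert, Finset.mem_singleton]
    push_neg
    exact ⟨fun hh => hz0 hh.symm, fun hh => one_ne_zero (α := R) hh.symm,
      fun hh => h1z0 hh.symm⟩
  have hc4 : Fintype.card R = 4 := by
    rw [← Finset.card_univ, ← huniv,
      Finset.card_insert_of_notMem hn0, Finset.card_insert_of_notMem hnz,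
      Finset.card_insert_of_notMem hn1, Finset.card_singleton]
  have htwo : (1 : R) + 1 = 0 ∨ (1 : R) + 1 = z := by
    rcases hloc ((1 : R) + 1) with hu | hn
    · rcases hunit2 _ hu with hh | hh
      · exact absurd (show (1 : R) = 0 by linear_combination hh) one_ne_zero
      · exact absurd (show (1 : R) = z by linear_combination hh) (Ne.symm hz1')
    · rcases hclass2 _ hn with hh | hh
      · exact Or.inl hh
      · exact Or.inr hh
  rcases htwo with h2 | h2
  · -- characteristic 2 : dual numbers over ZMod 2
    right; right
    have hchar2 : ringChar R = 2 := by
      have hdvd : ringChar R ∣ 2 :=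
        ringChar.dvd (by rw [show ((2 : ℕ) : R) = 1 + 1 from by push_cast; ring]; exact h2)
      rcases (Nat.dvd_prime Nat.prime_two).mp hdvd with hh | hh
      · exact absurd hh CharP.ringChar_ne_one
      · exact hh
    haveI : CharP R 2 := ringChar.of_eq hchar2
    letI : Algebra (ZMod 2) R := ZMod.algebra R 2
    let F := DualNumber.lift (R := ZMod 2) (A := ZMod 2) (B := R)
      ⟨(Algebra.ofId (ZMod 2) R, z), hzz, fun a => Commute.all _ _⟩
    have hFapp : ∀ a : DualNumber (ZMod 2),
        F a = algebraMap (ZMod 2) R a.fst + algebraMap (ZMod 2) R a.snd * z := by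
      intro a
      rw [show F a = (Algebra.ofId (ZMod 2) R) a.fst + (Algebra.ofId (ZMod 2) R) a.snd * z
        from DualNumber.lift_apply_apply _ a]
      simp [Algebra.ofId_apply]
    have hz2cases : ∀ y : ZMod 2, y = 0 ∨ y = 1 := by decide
    have hFinj : Function.Injective F := by
      rw [injective_iff_map_eq_zero]
      intro a ha
      rw [hFapp] at ha
      rcases hz2cases a.fst with hf1 | hf1 <;> rcases hz2cases a.snd with hf2 | hf2 <;>
        rw [hf1, hf2] at ha <;>
        simp only [map_zero, map_one, zero_add, add_zero, one_mul, zero_mul] at ha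
      · exact TrivSqZeroExt.ext (by simp [hf1]) (by simp [hf2])
      · exact absurd ha hz0
      · exact absurd ha one_ne_zero
      · exact absurd ha h1z0
    have hFbij : Function.Bijective F :=
      (Fintype.bijective_iff_injective_and_card F).mpr ⟨hFinj, by rw [hc4]; decide⟩
    exact ⟨(RingEquiv.ofBijective F hFbij).symm⟩
  · -- characteristic 4 : ZMod 4
    right; left
    have h2z : (2 : R) = z := by rw [show (2 : R) = 1 + 1 from by norm_num]; exact h2
    have h4 : ((4 : ℕ) : R) = 0 := by
      push_cast
      rw [show (4 : R) = 2 * 2 from by norm_num, h2z, hzz]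
    have hchar4 : ringChar R = 4 := by
      have hdvd : ringChar R ∣ 4 := ringChar.dvd h4
      have h1' : ringChar R ≠ 1 := CharP.ringChar_ne_one
      have h2' : ringChar R ≠ 2 := by
        intro hh
        haveI : CharP R 2 := ringChar.of_eq hh
        have h20 : (2 : R) = 0 := by exact_mod_cast CharP.cast_eq_zero R 2
        rw [h2z] at h20
        exact hz0 h20
      obtain ⟨i, hile, hieq⟩ := (Nat.dvd_prime_pow Nat.prime_two).mp
        (show ringChar R ∣ 2 ^ 2 by norm_num; exact hdvd)
      interval_cases i
      · rw [pow_zero] at hieq; exact absurd hieq h1'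
      · rw [pow_one] at hieq; exact absurd hieq h2'
      · rw [hieq]; norm_num
    haveI : CharP R 4 := ringChar.of_eq hchar4
    exact ⟨(ZMod.ringEquiv R hc4).symm⟩


end Stmt0Aux

/-- For a finite commutative ring `R` with unit element,
`s(R) = |R|` holds iff `R` is a finite field, or `R ≅ ℤ/4ℤ`, or `R` is
isomorphic to the dual numbers over `ℤ/2ℤ` (the ring ρ). Here
`s(R)` is the minimal `m : ℕ` such that some polynomial `p ∈ R[x]` with
`deg p < m` satisfies `p(x) = x^m` for all `x ∈ R`. -/
theorem stmt_0 (R : Type*) [CommRing R] [Fintype R] :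
    sInf {m : ℕ | ∃ p : Polynomial R,
        p.degree < (m : WithBot ℕ) ∧ ∀ x : R, p.eval x = x ^ m}
      = Fintype.card R
    ↔ IsField R ∨ Nonempty (R ≃+* ZMod 4)
        ∨ Nonempty (R ≃+* DualNumber (ZMod 2)) := by
  constructor
  · intro h
    exact Stmt0Aux.forward R h
  · rintro (hf | e | e)
    · exact Stmt0Aux.field_case R hf
    · obtain ⟨e⟩ := e
      have h1 : Stmt0Aux.SSet R = Stmt0Aux.SSet (ZMod 4) := Stmt0Aux.SSet_eq e
      have h2 := Stmt0Aux.card4_case (ZMod 4)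
        (by decide) (by decide) (by decide) (by decide) (by decide)
      have h3 : Fintype.card R = Fintype.card (ZMod 4) := Fintype.card_congr e.toEquiv
      show sInf (Stmt0Aux.SSet R) = Fintype.card R
      rw [h1, h2, h3]
    · obtain ⟨e⟩ := e
      have h1 : Stmt0Aux.SSet R = Stmt0Aux.SSet (DualNumber (ZMod 2)) := Stmt0Aux.SSet_eq e
      have h2 := Stmt0Aux.card4_case (DualNumber (ZMod 2))
        (by decide) (by decide) (by decide) (by decide) (by decide)
      have h3 : Fintype.card R = Fintype.card (DualNumber (ZMod 2)) :=
        Fintype.card_congr e.toEquiv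
      show sInf (Stmt0Aux.SSet R) = Fintype.card R
      rw [h1, h2, h3]
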